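/- Let t ≥ 1 be an integer and (G,σ) a signed (2t+1)-regular graph. If (G,σ) admits a modular nowhere-zero (2 + 1/t)-flow φ, then |φ(e)| ∈ {1, 1 + 1/t} for every edge e of G. -/

import Mathlib

open Finset

/-- A finite loopless multigraph with vertex type `V` and edge type `E`;
`ends e` is the unordered pair of the two distinct endpoints of the edge `e`. -/
structure Multigraph (V E : Type) where
  ends : E → Sym2 V
  not_loop : ∀ e, ¬ (ends e).IsDiag

namespace Multigraph

variable {V E : Type} [Fintype V] [Fintype E] [DecidableEq V] [DecidableEq E]

/-- The edge `e` is incident with the vertex `v`. -/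
def Inc (G : Multigraph V E) (v : V) (e : E) : Prop := v ∈ G.ends e

instance (G : Multigraph V E) (v : V) (e : E) : Decidable (G.Inc v e) :=
  inferInstanceAs (Decidable (v ∈ G.ends e))

/-- The set of edges incident with `v`. -/
def incEdges (G : Multigraph V E) (v : V) : Finset E :=
  Finset.univ.filter fun e => G.Inc v e

/-- The degree of a vertex. -/
def degree (G : Multigraph V E) (v : V) : ℕ := (G.incEdges v).card

/-- `G` is `k`-regular. -/
def IsRegular (G : Multigraph V E) (k : ℕ) : Prop := ∀ v, G.degree v = k

/-- The set `N_σ` of negative edges of a signature `σ : E → ℤˣ`. -/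
def negEdges (G : Multigraph V E) (σ : E → ℤˣ) : Finset E :=
  Finset.univ.filter fun e => σ e = -1

/-- `τ` assigns a sign to every half-edge (i.e. to each edge at each of its endpoints);
it is an orientation of the signed graph `(G, σ)` if for every edge `e = uv` the two
half-edge signs multiply to `-σ e`. -/
def IsOrientation (G : Multigraph V E) (σ : E → ℤˣ) (τ : E → V → ℤˣ) : Prop :=
  ∀ e u v, G.ends e = s(u, v) → τ e u * τ e v = - σ e

/-- The boundary `δf(v) = ∑_{h at v} τ(h) f(e_h)` of `f` at `v`. -/
def boundary {R : Type} [CommRing R] (G : Multigraph V E) (τ : E → V → ℤˣ)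
    (f : E → R) (v : V) : R :=
  ∑ e ∈ G.incEdges v, (((τ e v : ℤˣ) : ℤ) : R) * f e

/-- `f` is a nowhere-zero `r`-flow on the signed graph `(G, σ)`:
for some orientation all boundaries vanish and `1 ≤ |f e| ≤ r - 1` for every edge. -/
def IsNZFlow (G : Multigraph V E) (σ : E → ℤˣ) (r : ℝ) (f : E → ℝ) : Prop :=
  ∃ τ, G.IsOrientation σ τ ∧ (∀ v, G.boundary τ f v = 0) ∧
    ∀ e, 1 ≤ |f e| ∧ |f e| ≤ r - 1

/-- `(G, σ)` admits a nowhere-zero `r`-flow. -/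
def HasNZFlow (G : Multigraph V E) (σ : E → ℤˣ) (r : ℝ) : Prop :=
  ∃ f, G.IsNZFlow σ r f

/-- `f` is a modular nowhere-zero `r`-flow on `(G, σ)`: for some orientation all
boundaries are `≡ 0 (mod r)` and `1 ≤ |f e| ≤ r - 1` for every edge. -/
def IsModularNZFlow (G : Multigraph V E) (σ : E → ℤˣ) (r : ℝ) (f : E → ℝ) : Prop :=
  ∃ τ, G.IsOrientation σ τ ∧ (∀ v, ∃ k : ℤ, G.boundary τ f v = k * r) ∧
    ∀ e, 1 ≤ |f e| ∧ |f e| ≤ r - 1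

/-- `f` is an integer-valued nowhere-zero `n`-flow on `(G, σ)`. -/
def IsIntNZFlow (G : Multigraph V E) (σ : E → ℤˣ) (n : ℕ) (f : E → ℤ) : Prop :=
  ∃ τ, G.IsOrientation σ τ ∧ (∀ v, G.boundary τ f v = 0) ∧
    ∀ e, 1 ≤ |f e| ∧ |f e| ≤ (n : ℤ) - 1

/-- `(G, σ)` admits an integer nowhere-zero `n`-flow. -/
def HasIntNZFlow (G : Multigraph V E) (σ : E → ℤˣ) (n : ℕ) : Prop :=
  ∃ f, G.IsIntNZFlow σ n f

/-- `(G, σ)` is flow-admissible: it has a nowhere-zero `r`-flow for some `r ≥ 2`. -/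
def FlowAdmissible (G : Multigraph V E) (σ : E → ℤˣ) : Prop :=
  ∃ r : ℝ, 2 ≤ r ∧ G.HasNZFlow σ r

/-- The circular flow number `F_c(G, σ)` (the least `r` admitting a nowhere-zero `r`-flow). -/
noncomputable def Fc (G : Multigraph V E) (σ : E → ℤˣ) : ℝ :=
  sInf {r : ℝ | 2 ≤ r ∧ G.HasNZFlow σ r}

/-- The integer flow number `F(G, σ)` (the least `n` admitting an integer
nowhere-zero `n`-flow). -/
noncomputable def Fi (G : Multigraph V E) (σ : E → ℤˣ) : ℕ :=
  sInf {n : ℕ | G.HasIntNZFlow σ n}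

/-- The flow spectrum `S(G)` of `G`. -/
def Spectrum (G : Multigraph V E) : Set ℝ :=
  {r | ∃ σ : E → ℤˣ, G.FlowAdmissible σ ∧ G.Fc σ = r}

/-- The integer flow spectrum `S̄(G)` of `G`. -/
def IntSpectrum (G : Multigraph V E) : Set ℕ :=
  {n | ∃ σ : E → ℤˣ, G.FlowAdmissible σ ∧ G.Fi σ = n}

/-- `F` is the edge set of a spanning `t`-regular subgraph (a `t`-factor) of `G`. -/
def IsFactor (G : Multigraph V E) (t : ℕ) (F : Finset E) : Prop :=
  ∀ v, (G.incEdges v ∩ F).card = t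

/-- `G` has a `t`-factor. -/
def HasFactor (G : Multigraph V E) (t : ℕ) : Prop := ∃ F, G.IsFactor t F

/-- `G - X` is bipartite. -/
def BipartiteOff (G : Multigraph V E) (X : Finset E) : Prop :=
  ∃ c : V → Bool, ∀ e ∉ X, ∀ u v, G.ends e = s(u, v) → c u ≠ c v

/-- `G` is bipartite. -/
def Bipartite (G : Multigraph V E) : Prop := G.BipartiteOff ∅

/-- `X` is an `r`-minimal set: some signature `σ` with `N_σ = X` has circular flow
number `r`, while no signature whose negative edge set is a proper subset of `X`
has circular flow number `r`. -/
def IsRMinimal (G : Multigraph V E) (r : ℝ) (X : Finset E) : Prop :=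
  (∃ σ, G.negEdges σ = X ∧ G.FlowAdmissible σ ∧ G.Fc σ = r) ∧
  ∀ σ, G.negEdges σ ⊂ X → ¬ (G.FlowAdmissible σ ∧ G.Fc σ = r)

/-- `X` is an `r`-minimal set of minimum cardinality. -/
def IsSmallestRMinimal (G : Multigraph V E) (r : ℝ) (X : Finset E) : Prop :=
  G.IsRMinimal r X ∧ ∀ Y, G.IsRMinimal r Y → X.card ≤ Y.card

end Multigraph

open Multigraph

/-- Let `t ≥ 1` and let `(G, σ)` be a signed `(2t+1)`-regular graph.  If `(G, σ)`
admits a modular nowhere-zero `(2 + 1/t)`-flow `φ`, then `|φ(e)| ∈ {1, 1 + 1/t}`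
for every edge `e` of `G`. -/
theorem stmt2 {V E : Type} [Fintype V] [Fintype E] [DecidableEq V] [DecidableEq E]
    (t : ℕ) (ht : 1 ≤ t) (G : Multigraph V E) (σ : E → ℤˣ)
    (hreg : G.IsRegular (2 * t + 1)) (f : E → ℝ)
    (hf : G.IsModularNZFlow σ (2 + 1 / (t : ℝ)) f) :
    ∀ e, |f e| = 1 ∨ |f e| = 1 + 1 / (t : ℝ) := by
  classical
  obtain ⟨τ, hτ, hbd, hbound⟩ := hf
  have ht0 : (0:ℝ) < (t:ℝ) := by exact_mod_cast ht
  have hr0 : (0:ℝ) < 2 + 1 / (t:ℝ) := by positivity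
  intro e0
  obtain ⟨⟨u, v⟩, huv⟩ := Quot.exists_rep (G.ends e0)
  have hends : G.ends e0 = s(u, v) := huv.symm
  have hv : e0 ∈ G.incEdges v := by
    simp only [Multigraph.incEdges, Finset.mem_filter, Finset.mem_univ, true_and,
      Multigraph.Inc, hends]
    exact Finset.mem_filter.mpr ⟨Finset.mem_univ _, (show v ∈ G.ends e0 by rw [hends]; exact Sym2.mem_mk_right u v)⟩
  set S := G.incEdges v with hS
  set a : E → ℝ := fun e => ((τ e v : ℤ) : ℝ) * f e with ha
  have habs : ∀ e, |a e| = |f e| := by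
    intro e
    rcases Int.units_eq_one_or (τ e v) with h | h <;> simp [ha, abs_mul, h]
  have hupper : ∀ e, |f e| ≤ 1 + 1 / (t:ℝ) := by
    intro e
    have := (hbound e).2
    linarith [this]
  have hlower : ∀ e, 1 ≤ |f e| := fun e => (hbound e).1
  obtain ⟨k, hk⟩ := hbd v
  have hsum : ∑ e ∈ S, a e = k * (2 + 1 / (t:ℝ)) := hk
  set P := S.filter (fun e => 0 < a e) with hP
  set p := P.card with hp
  set q := (S.filter (fun e => ¬ 0 < a e)).card with hq
  have hcard : S.card = 2 * t + 1 := hreg v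
  have hpq : p + q = 2 * t + 1 := by
    rw [hp, hq, Finset.card_filter_add_card_filter_not, hcard]
  have hqcast : (q:ℝ) = 2 * (t:ℝ) + 1 - p := by
    have : (p:ℝ) + q = 2 * t + 1 := by exact_mod_cast hpq
    linarith
  -- pointwise bounds
  have haP : ∀ e ∈ S, 0 < a e → 1 ≤ a e ∧ a e ≤ 1 + 1 / (t:ℝ) := by
    intro e _ hpos
    have h1 : a e = |a e| := (abs_of_pos hpos).symm
    constructor
    · rw [h1, habs]; exact hlower e
    · rw [h1, habs]; exact hupper e
  have haN : ∀ e ∈ S, ¬ 0 < a e → a e ≤ -1 ∧ -(1 + 1 / (t:ℝ)) ≤ a e := by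
    intro e _ hneg
    push_neg at hneg
    have h1 : a e = -|a e| := by rw [abs_of_nonpos hneg]; ring
    constructor
    · rw [h1, habs]; linarith [hlower e]
    · rw [h1, habs]; linarith [hupper e]
  -- the two bounding functions
  set b1 : E → ℝ := fun e => if 0 < a e then 1 + 1 / (t:ℝ) else -1 with hb1
  set b2 : E → ℝ := fun e => if 0 < a e then 1 else -(1 + 1 / (t:ℝ)) with hb2
  have hab1 : ∀ e ∈ S, a e ≤ b1 e := by
    intro e he
    by_cases hpos : 0 < a e
    · simp only [hb1, if_pos hpos]; exact (haP e he hpos).2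
    · simp only [hb1, if_neg hpos]; linarith [(haN e he hpos).1]
  have hab2 : ∀ e ∈ S, b2 e ≤ a e := by
    intro e he
    by_cases hpos : 0 < a e
    · simp only [hb2, if_pos hpos]; exact (haP e he hpos).1
    · simp only [hb2, if_neg hpos]; exact (haN e he hpos).2
  have hsumb1 : ∑ e ∈ S, b1 e = (p:ℝ) * (1 + 1 / (t:ℝ)) - q := by
    rw [hb1, Finset.sum_ite, Finset.sum_const, Finset.sum_const]
    simp only [nsmul_eq_mul, ← hP, ← hp, ← hq]
    ring
  have hsumb2 : ∑ e ∈ S, b2 e = (p:ℝ) - q * (1 + 1 / (t:ℝ)) := by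
    rw [hb2, Finset.sum_ite, Finset.sum_const, Finset.sum_const]
    simp only [nsmul_eq_mul, ← hP, ← hp, ← hq]
    ring
  have hB1 : (p:ℝ) * (1 + 1 / (t:ℝ)) - q = ((p:ℝ) - t) * (2 + 1 / (t:ℝ)) := by
    rw [hqcast]; field_simp; ring
  have hB2 : (p:ℝ) - q * (1 + 1 / (t:ℝ)) = ((p:ℝ) - t - 1) * (2 + 1 / (t:ℝ)) := by
    rw [hqcast]; field_simp; ring
  -- bounds on k
  have hle1 : (k:ℝ) * (2 + 1 / (t:ℝ)) ≤ ((p:ℝ) - t) * (2 + 1 / (t:ℝ)) := by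
    rw [← hsum, ← hB1, ← hsumb1]
    exact Finset.sum_le_sum hab1
  have hle2 : ((p:ℝ) - t - 1) * (2 + 1 / (t:ℝ)) ≤ (k:ℝ) * (2 + 1 / (t:ℝ)) := by
    rw [← hsum, ← hB2, ← hsumb2]
    exact Finset.sum_le_sum hab2
  have hk1 : (k:ℝ) ≤ (p:ℝ) - t := le_of_mul_le_mul_right hle1 hr0
  have hk2 : (p:ℝ) - t - 1 ≤ (k:ℝ) := le_of_mul_le_mul_right hle2 hr0
  have hk1' : k ≤ (p:ℤ) - t := by exact_mod_cast hk1
  have hk2' : (p:ℤ) - t - 1 ≤ k := by exact_mod_cast hk2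
  have hkcases : k = (p:ℤ) - t ∨ k = (p:ℤ) - t - 1 := by omega
  have habs' : |f e0| = |a e0| := (habs e0).symm
  rcases hkcases with hkk | hkk
  · -- upper equality case
    have heq : ∑ e ∈ S, a e = ∑ e ∈ S, b1 e := by
      rw [hsum, hsumb1, hB1, hkk]; push_cast; ring_nf
    have := (Finset.sum_eq_sum_iff_of_le hab1).mp heq e0 hv
    by_cases hpos : 0 < a e0
    · right
      rw [habs', this]
      simp only [hb1, if_pos hpos]
      rw [abs_of_pos]; positivity
    · left
      rw [habs', this]
      simp [hb1, if_neg hpos]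
  · -- lower equality case
    have heq : ∑ e ∈ S, b2 e = ∑ e ∈ S, a e := by
      rw [hsum, hsumb2, hB2, hkk]; push_cast; ring_nf
    have := (Finset.sum_eq_sum_iff_of_le hab2).mp heq e0 hv
    by_cases hpos : 0 < a e0
    · left
      rw [habs', ← this]
      simp [hb2, if_pos hpos]
    · right
      rw [habs', ← this]
      simp only [hb2, if_neg hpos]
      rw [abs_neg, abs_of_pos]; positivity
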